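/- Let L, M : ℕ → ℝ be positive sequences such that (L k / M k)^(1/k) → 0 and (M k)^(1/k) → ∞. Then there exist positive sequences N¹, N² with (Nⁱ k)^(1/k) → ∞ such that L k ≤ N¹ k for all k, (N¹ k / N² k)^(1/k) → 0, and (N² k / M k)^(1/k) → 0. -/

import Mathlib

open Filter

private lemma rpow_swap' (x a b : ℝ) (hx : 0 ≤ x) : (x ^ a) ^ b = (x ^ b) ^ a := by
  rw [← Real.rpow_mul hx, mul_comm, Real.rpow_mul hx]

private lemma rpow_max' {a b p : ℝ} (ha : 0 ≤ a) (hb : 0 ≤ b) (hp : 0 ≤ p) :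
    (max a b) ^ p = max (a ^ p) (b ^ p) := by
  rcases le_total a b with h | h
  · rw [max_eq_right h, max_eq_right (Real.rpow_le_rpow ha h hp)]
  · rw [max_eq_left h, max_eq_left (Real.rpow_le_rpow hb h hp)]

theorem interpolation_sequences (L M : ℕ → ℝ)
    (hL : ∀ k, 0 < L k) (hM : ∀ k, 0 < M k)
    (hLM : Tendsto (fun k : ℕ => (L k / M k) ^ ((1 : ℝ) / k)) atTop (nhds 0))
    (hMinf : Tendsto (fun k : ℕ => (M k) ^ ((1 : ℝ) / k)) atTop atTop) :
    ∃ N₁ N₂ : ℕ → ℝ, (∀ k, 0 < N₁ k) ∧ (∀ k, 0 < N₂ k) ∧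
      Tendsto (fun k : ℕ => (N₁ k) ^ ((1 : ℝ) / k)) atTop atTop ∧
      Tendsto (fun k : ℕ => (N₂ k) ^ ((1 : ℝ) / k)) atTop atTop ∧
      (∀ k, L k ≤ N₁ k) ∧
      Tendsto (fun k : ℕ => (N₁ k / N₂ k) ^ ((1 : ℝ) / k)) atTop (nhds 0) ∧
      Tendsto (fun k : ℕ => (N₂ k / M k) ^ ((1 : ℝ) / k)) atTop (nhds 0) := by
  set N₁ : ℕ → ℝ := fun k => max ((M k) ^ ((1:ℝ)/2)) (L k) with hN₁def
  set N₂ : ℕ → ℝ := fun k => (N₁ k * M k) ^ ((1:ℝ)/2) with hN₂def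
  have hN₁pos : ∀ k, 0 < N₁ k := fun k =>
    lt_max_of_lt_right (hL k)
  have hN₂pos : ∀ k, 0 < N₂ k := fun k =>
    Real.rpow_pos_of_pos (mul_pos (hN₁pos k) (hM k)) _
  -- N₁ ^ (1/k) tends to atTop
  have hsqM : Tendsto (fun k : ℕ => ((M k) ^ ((1:ℝ)/k)) ^ ((1:ℝ)/2)) atTop atTop :=
    (tendsto_rpow_atTop (by norm_num : (0:ℝ) < 1/2)).comp hMinf
  have hN₁inf : Tendsto (fun k : ℕ => (N₁ k) ^ ((1:ℝ)/k)) atTop atTop := by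
    apply tendsto_atTop_mono _ hsqM
    intro k
    calc ((M k) ^ ((1:ℝ)/k)) ^ ((1:ℝ)/2) = ((M k) ^ ((1:ℝ)/2)) ^ ((1:ℝ)/k) :=
          rpow_swap' _ _ _ (hM k).le
      _ ≤ (N₁ k) ^ ((1:ℝ)/k) :=
          Real.rpow_le_rpow (Real.rpow_nonneg (hM k).le _) (le_max_left _ _)
            (by positivity)
  -- N₂ ^ (1/k) tends to atTop
  have hN₂inf : Tendsto (fun k : ℕ => (N₂ k) ^ ((1:ℝ)/k)) atTop atTop := by
    have heq : ∀ k : ℕ, (N₂ k) ^ ((1:ℝ)/k)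
        = ((N₁ k) ^ ((1:ℝ)/k) * (M k) ^ ((1:ℝ)/k)) ^ ((1:ℝ)/2) := by
      intro k
      rw [hN₂def]
      rw [rpow_swap' _ _ _ (mul_pos (hN₁pos k) (hM k)).le,
        Real.mul_rpow (hN₁pos k).le (hM k).le]
    simp only [heq]
    exact (tendsto_rpow_atTop (by norm_num : (0:ℝ) < 1/2)).comp
      (hN₁inf.atTop_mul_atTop₀ hMinf)
  -- (N₁/M)^(1/k) → 0
  have hP : Tendsto (fun k : ℕ => (N₁ k / M k) ^ ((1:ℝ)/k)) atTop (nhds 0) := by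
    have heq : ∀ k : ℕ, (N₁ k / M k) ^ ((1:ℝ)/k)
        = max (((M k) ^ ((1:ℝ)/k)) ^ (-(1:ℝ)/2)) ((L k / M k) ^ ((1:ℝ)/k)) := by
      intro k
      have h1 : N₁ k / M k = max ((M k) ^ (-(1:ℝ)/2)) (L k / M k) := by
        show max ((M k) ^ ((1:ℝ)/2)) (L k) / M k = _
        rw [← max_div_div_right (hM k).le]
        congr 1
        rw [show (-(1:ℝ)/2) = (1:ℝ)/2 - 1 by norm_num, Real.rpow_sub (hM k),
          Real.rpow_one]
      rw [h1, rpow_max' (Real.rpow_nonneg (hM k).le _)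
        (div_nonneg (hL k).le (hM k).le) (by positivity)]
      congr 1
      exact rpow_swap' _ _ _ (hM k).le
    simp only [heq]
    have h2 : Tendsto (fun k : ℕ => ((M k) ^ ((1:ℝ)/k)) ^ (-(1:ℝ)/2)) atTop (nhds 0) := by
      have := (tendsto_rpow_neg_atTop (by norm_num : (0:ℝ) < 1/2)).comp hMinf
      simpa [Function.comp_def, neg_div] using this
    have := h2.max hLM
    simpa using this
  -- both ratios equal (N₁/M)^(1/2)
  have hkey : ∀ k : ℕ, N₁ k / N₂ k = (N₁ k / M k) ^ ((1:ℝ)/2) ∧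
      N₂ k / M k = (N₁ k / M k) ^ ((1:ℝ)/2) := by
    intro k
    have hN := hN₁pos k
    have hMk := hM k
    have hmul : (N₁ k * M k) ^ ((1:ℝ)/2) = (N₁ k) ^ ((1:ℝ)/2) * (M k) ^ ((1:ℝ)/2) :=
      Real.mul_rpow hN.le hMk.le
    have hdiv : (N₁ k / M k) ^ ((1:ℝ)/2) = (N₁ k) ^ ((1:ℝ)/2) / (M k) ^ ((1:ℝ)/2) :=
      Real.div_rpow hN.le hMk.le _
    have hhalf : (N₁ k) ^ ((1:ℝ)/2) * (N₁ k) ^ ((1:ℝ)/2) = N₁ k := by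
      rw [← Real.rpow_add hN]; norm_num
    have hhalfM : (M k) ^ ((1:ℝ)/2) * (M k) ^ ((1:ℝ)/2) = M k := by
      rw [← Real.rpow_add hMk]; norm_num
    have hNpos : (0:ℝ) < (N₁ k) ^ ((1:ℝ)/2) := Real.rpow_pos_of_pos hN _
    have hMpos : (0:ℝ) < (M k) ^ ((1:ℝ)/2) := Real.rpow_pos_of_pos hMk _
    constructor
    · rw [hN₂def, hdiv]
      simp only
      rw [hmul]
      rw [div_eq_div_iff (by positivity) hMpos.ne']
      nlinarith [hhalf]
    · rw [hN₂def, hdiv]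
      simp only
      rw [hmul]
      rw [div_eq_div_iff hMk.ne' hMpos.ne']
      nlinarith [hhalfM]
  have hPhalf : Tendsto (fun k : ℕ => ((N₁ k / M k) ^ ((1:ℝ)/2)) ^ ((1:ℝ)/k))
      atTop (nhds 0) := by
    have heq : ∀ k : ℕ, ((N₁ k / M k) ^ ((1:ℝ)/2)) ^ ((1:ℝ)/k)
        = ((N₁ k / M k) ^ ((1:ℝ)/k)) ^ ((1:ℝ)/2) := fun k =>
      rpow_swap' _ _ _ (div_nonneg (hN₁pos k).le (hM k).le)
    simp only [heq]
    have := hP.rpow_const (p := (1:ℝ)/2) (Or.inr (by norm_num))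
    simpa using this
  refine ⟨N₁, N₂, hN₁pos, hN₂pos, hN₁inf, hN₂inf, fun k => le_max_right _ _, ?_, ?_⟩
  · have : (fun k : ℕ => (N₁ k / N₂ k) ^ ((1:ℝ)/k))
        = fun k : ℕ => ((N₁ k / M k) ^ ((1:ℝ)/2)) ^ ((1:ℝ)/k) := by
      funext k; rw [(hkey k).1]
    rw [this]; exact hPhalf
  · have : (fun k : ℕ => (N₂ k / M k) ^ ((1:ℝ)/k))
        = fun k : ℕ => ((N₁ k / M k) ^ ((1:ℝ)/2)) ^ ((1:ℝ)/k) := by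
      funext k; rw [(hkey k).2]
    rw [this]; exact hPhalf
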